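/- Let S, T be finite sets, L : {0,1}^S → {0,1} a monotone Boolean function, and ψ : S → T such that |ψ(Z)| = |Z| for every minimal zero-set Z of L. Let X = (X(i))_{i∈S} and Y = (Y(j))_{j∈T} be i.i.d. Bernoulli(p) collections. Then P[L(Y∘ψ) = 1] ≥ P[L(X) = 1]. -/

import Mathlib

noncomputable section StmtAux
set_option linter.unusedSectionVars false

def wB (p : ℝ) (b : Bool) : ℝ := if b then p else 1 - p
def biR (b : Bool) : ℝ := if b then 1 else 0
def indZ {S : Type*} [DecidableEq S] (Z : Finset S) : S → Bool :=
  fun i => if i ∈ Z then false else true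

lemma wB_nonneg {p : ℝ} (hp0 : 0 ≤ p) (hp1 : p ≤ 1) (b : Bool) : 0 ≤ wB p b := by
  cases b <;> simp [wB] <;> linarith

lemma wB_true (p : ℝ) : wB p true = p := rfl
lemma wB_false (p : ℝ) : wB p false = 1 - p := rfl

lemma sum_wB_bool (p : ℝ) : ∑ b : Bool, wB p b = 1 := by simp [wB]

lemma sum_w_one (C : Type*) [Fintype C] [DecidableEq C] (p : ℝ) :
    ∑ z : C → Bool, ∏ c, wB p (z c) = 1 := by
  classical
  have h := Finset.prod_univ_sum (fun _ : C => (Finset.univ : Finset Bool))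
    (fun _ b => wB p b)
  rw [Fintype.piFinset_univ] at h
  rw [← h, Finset.prod_congr rfl (fun c _ => sum_wB_bool p), Finset.prod_const_one]

/-- reindexing a Bernoulli sum along an injection -/
lemma sum_reindex_inj {A B : Type*} [Fintype A] [DecidableEq A] [Fintype B] [DecidableEq B]
    (p : ℝ) (g : A → B) (hg : Function.Injective g) (f : (A → Bool) → ℝ) :
    ∑ y : B → Bool, (∏ j, wB p (y j)) * f (fun a => y (g a))
      = ∑ x : A → Bool, (∏ i, wB p (x i)) * f x := by
  classical
  set mk : (A → Bool) × ({b : B // ¬ ∃ a, g a = b} → Bool) → (B → Bool) :=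
    fun q => fun b => if h : ∃ a, g a = b then q.1 h.choose else q.2 ⟨b, h⟩ with hmk
  have hfst : ∀ q, (fun a => mk q (g a)) = q.1 := by
    rintro ⟨x, z⟩
    funext a
    have h : ∃ a', g a' = g a := ⟨a, rfl⟩
    show (if h : ∃ a', g a' = g a then x h.choose else z ⟨g a, h⟩) = x a
    rw [dif_pos h]
    exact congrArg x (hg h.choose_spec)
  have hsnd : ∀ q (c : {b : B // ¬ ∃ a, g a = b}), mk q c.1 = q.2 c := by
    rintro ⟨x, z⟩ c
    show (if h : ∃ a', g a' = c.1 then x h.choose else z ⟨c.1, h⟩) = z c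
    rw [dif_neg c.2]
  set E : (A → Bool) × ({b : B // ¬ ∃ a, g a = b} → Bool) ≃ (B → Bool) :=
    { toFun := mk
      invFun := fun y => (fun a => y (g a), fun c => y c.1)
      left_inv := by
        rintro ⟨x, z⟩
        exact Prod.ext (hfst (x, z)) (funext fun c => hsnd (x, z) c)
      right_inv := by
        intro y
        funext b
        by_cases h : ∃ a, g a = b
        · show (if h' : ∃ a, g a = b then y (g h'.choose) else _) = y b
          rw [dif_pos h]
          exact congrArg y h.choose_spec
        · show (if h' : ∃ a, g a = b then _ else y b) = y b
          rw [dif_neg h] } with hE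
  have hEapp : ∀ q, E q = mk q := fun q => rfl
  rw [← E.sum_comp (fun y => (∏ j, wB p (y j)) * f (fun a => y (g a)))]
  have heA : Function.Bijective (fun a => (⟨g a, a, rfl⟩ : {b : B // ∃ a, g a = b})) :=
    ⟨fun a a' h => hg (congrArg Subtype.val h),
     fun b => ⟨b.2.choose, Subtype.ext b.2.choose_spec⟩⟩
  have hsplit : ∀ q : (A → Bool) × ({b : B // ¬ ∃ a, g a = b} → Bool),
      (∏ j, wB p (E q j)) = (∏ i, wB p (q.1 i)) * ∏ c, wB p (q.2 c) := by
    rintro ⟨x, z⟩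
    have h1 : ∏ j, wB p (E (x, z) j)
        = ∏ s : {b : B // ∃ a, g a = b} ⊕ {b : B // ¬ ∃ a, g a = b},
            wB p (E (x, z) ((Equiv.sumCompl _) s)) :=
      (Fintype.prod_equiv (Equiv.sumCompl _) _ _ (fun s => rfl)).symm
    rw [h1, Fintype.prod_sum_type]
    congr 1
    · refine (Fintype.prod_bijective _ heA (fun a => wB p (x a))
        (fun b => wB p (E (x, z) ((Equiv.sumCompl (fun b => ∃ a, g a = b)) (Sum.inl b)))) ?_).symm
      intro a
      show wB p (x a) = wB p (E (x, z) (g a))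
      exact congrArg (wB p) (congrFun (hfst (x, z)) a).symm
    · exact Finset.prod_congr rfl fun c _ => congrArg (wB p) (hsnd (x, z) c)
  calc ∑ q : (A → Bool) × ({b : B // ¬ ∃ a, g a = b} → Bool),
        (∏ j, wB p (E q j)) * f (fun a => E q (g a))
      = ∑ q : (A → Bool) × ({b : B // ¬ ∃ a, g a = b} → Bool),
        (∏ c, wB p (q.2 c)) * ((∏ i, wB p (q.1 i)) * f q.1) := by
        refine Finset.sum_congr rfl fun q _ => ?_
        rw [hsplit q, hEapp, hfst q]
        ring
    _ = ∑ x : A → Bool, (∏ i, wB p (x i)) * f x := by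
        rw [Fintype.sum_prod_type]
        refine Finset.sum_congr rfl fun x _ => ?_
        show ∑ z : {b : B // ¬ ∃ a, g a = b} → Bool,
            (∏ c, wB p (z c)) * ((∏ i, wB p (x i)) * f x) = _
        rw [← Finset.sum_mul, sum_w_one _ p, one_mul]

/-- reindex along an equivalence -/
lemma sum_reindex_equiv {A A2 : Type*} [Fintype A] [DecidableEq A] [Fintype A2] [DecidableEq A2]
    (p : ℝ) (e : A2 ≃ A) (f : (A → Bool) → ℝ) :
    ∑ u : A → Bool, (∏ r, wB p (u r)) * f u
      = ∑ v : A2 → Bool, (∏ r, wB p (v r)) * f (fun r => v (e.symm r)) := by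
  classical
  have hbij : Function.Bijective (fun (v : A2 → Bool) => fun r => v (e.symm r)) := by
    refine ⟨fun v v' h => funext fun r2 => ?_, fun u => ⟨fun r2 => u (e r2), funext fun r => ?_⟩⟩
    · have := congrFun h (e r2)
      simpa [e.symm_apply_apply] using this
    · show u (e (e.symm r)) = u r
      rw [e.apply_symm_apply]
  rw [← Fintype.sum_bijective _ hbij _
    (fun u => (∏ r, wB p (u r)) * f u) (fun v => rfl)]
  refine Finset.sum_congr rfl fun v _ => ?_
  have h1 : (∏ r, wB p (v (e.symm r))) = ∏ r2, wB p (v r2) :=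
    Fintype.prod_equiv e.symm (fun r => wB p (v (e.symm r))) (fun r2 => wB p (v r2))
      (fun r => rfl)
  show (∏ r, wB p (v (e.symm r))) * f (fun r => v (e.symm r)) = _
  rw [h1]

variable {S : Type*} [Fintype S] [DecidableEq S]

/-- every false configuration contains a minimal zero-set -/
lemma exists_min_zero (L : (S → Bool) → Bool) (x : S → Bool) (hx : L x = false) :
    ∃ Z : Finset S, (∀ i ∈ Z, x i = false) ∧ L (indZ Z) = false ∧
      ∀ Y ⊂ Z, L (indZ Y) ≠ false := by
  classical
  set coll : Finset (Finset S) :=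
    Finset.univ.filter (fun Z => (∀ i ∈ Z, x i = false) ∧ L (indZ Z) = false) with hcoll
  have hne : coll.Nonempty := by
    refine ⟨Finset.univ.filter (fun i => x i = false), ?_⟩
    rw [hcoll, Finset.mem_filter]
    refine ⟨Finset.mem_univ _, fun i hi => (Finset.mem_filter.mp hi).2, ?_⟩
    have : indZ (Finset.univ.filter (fun i => x i = false)) = x := by
      funext i
      cases hxi : x i <;> simp [indZ, hxi]
    rw [this, hx]
  obtain ⟨Z, hZmem, hZmin⟩ := coll.exists_minimal hne
  rw [hcoll, Finset.mem_filter] at hZmem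
  refine ⟨Z, hZmem.2.1, hZmem.2.2, fun Y hY hLY => ?_⟩
  have hYmem : Y ∈ coll := by
    rw [hcoll, Finset.mem_filter]
    exact ⟨Finset.mem_univ _, fun i hi => hZmem.2.1 i (hY.subset hi), hLY⟩
  exact hY.ne (le_antisymm hY.subset (hZmin hYmem hY.subset))

lemma prod_split (s1 s2 : S) (hne : s1 ≠ s2) (F : S → ℝ) :
    ∏ s, F s = F s1 * F s2 * ∏ c : {s : S // s ≠ s1 ∧ s ≠ s2}, F c.1 := by
  classical
  have huniv : (Finset.univ : Finset S)
      = insert s1 (insert s2 (Finset.univ.filter (fun s => s ≠ s1 ∧ s ≠ s2))) := by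
    ext s
    simp only [Finset.mem_univ, Finset.mem_insert, Finset.mem_filter, true_iff, true_and]
    by_cases h1 : s = s1
    · exact Or.inl h1
    · by_cases h2 : s = s2
      · exact Or.inr (Or.inl h2)
      · exact Or.inr (Or.inr ⟨h1, h2⟩)
  rw [huniv, Finset.prod_insert (by simp [hne]), Finset.prod_insert (by simp), ← mul_assoc]
  congr 1
  exact Finset.prod_subtype _ (by simp) F

def recomb (s1 s2 : S) (a b : Bool) (z : {s : S // s ≠ s1 ∧ s ≠ s2} → Bool) : S → Bool :=
  fun s => if h1 : s = s1 then a else if h2 : s = s2 then b else z ⟨s, h1, h2⟩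

variable {s1 s2 : S}

lemma recomb_s1 (a b : Bool) (z : {s : S // s ≠ s1 ∧ s ≠ s2} → Bool) :
    recomb s1 s2 a b z s1 = a := by simp [recomb]

lemma recomb_s2 (hne : s1 ≠ s2) (a b : Bool) (z : {s : S // s ≠ s1 ∧ s ≠ s2} → Bool) :
    recomb s1 s2 a b z s2 = b := by simp [recomb, Ne.symm hne]

lemma recomb_mem (a b : Bool) (z : {s : S // s ≠ s1 ∧ s ≠ s2} → Bool)
    (c : {s : S // s ≠ s1 ∧ s ≠ s2}) : recomb s1 s2 a b z c.1 = z c := by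
  show (if h1 : c.1 = s1 then a else if h2 : c.1 = s2 then b else z ⟨c.1, h1, h2⟩) = z c
  rw [dif_neg c.2.1, dif_neg c.2.2]

lemma recomb_bijective (hne : s1 ≠ s2) :
    Function.Bijective (fun q : (Bool × Bool) × ({s : S // s ≠ s1 ∧ s ≠ s2} → Bool) =>
      recomb s1 s2 q.1.1 q.1.2 q.2) := by
  constructor
  · rintro ⟨⟨a, b⟩, z⟩ ⟨⟨a', b'⟩, z'⟩ h
    replace h : recomb s1 s2 a b z = recomb s1 s2 a' b' z' := h
    have h1 := congrFun h s1
    rw [recomb_s1, recomb_s1] at h1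
    have h2 := congrFun h s2
    rw [recomb_s2 hne, recomb_s2 hne] at h2
    have h3 : z = z' := funext fun c => by
      have := congrFun h c.1
      rwa [recomb_mem, recomb_mem] at this
    simp [h1, h2, h3]
  · intro x
    refine ⟨((x s1, x s2), fun c => x c.1), funext fun s => ?_⟩
    show (if h1 : s = s1 then x s1 else if h2 : s = s2 then x s2 else x s) = x s
    by_cases h1 : s = s1
    · rw [dif_pos h1, h1]
    · rw [dif_neg h1]
      by_cases h2 : s = s2
      · rw [dif_pos h2, h2]
      · rw [dif_neg h2]

section MergeStep
set_option linter.unusedSectionVars false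
variable {S : Type*} [Fintype S] [DecidableEq S]

lemma bool_le_trans {L : (S → Bool) → Bool} (hL : Monotone L) {x y : S → Bool}
    (hxy : x ≤ y) (hx : L x = true) : L y = true := by
  have := hL hxy
  rw [hx] at this
  exact le_antisymm (Bool.le_true _) this

set_option maxHeartbeats 1600000 in
lemma merge_step (p : ℝ) (hp0 : 0 ≤ p) (hp1 : p ≤ 1)
    (L : (S → Bool) → Bool) (hL : Monotone L) (s1 s2 : S) (hne : s1 ≠ s2)
    (hno : ∀ Z : Finset S, L (indZ Z) = false → (∀ Y ⊂ Z, L (indZ Y) ≠ false) →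
      ¬(s1 ∈ Z ∧ s2 ∈ Z)) :
    ∑ x : S → Bool, (∏ i, wB p (x i)) * biR (L (fun s => x (if s = s2 then s1 else s)))
      ≥ ∑ x : S → Bool, (∏ i, wB p (x i)) * biR (L x) := by
  classical
  set C := {s : S // s ≠ s1 ∧ s ≠ s2} with hC
  set toS : (Bool × Bool) × (C → Bool) → (S → Bool) :=
    fun q => recomb s1 s2 q.1.1 q.1.2 q.2 with htoS
  have hbij := recomb_bijective (S := S) hne
  -- weight splitting
  have key : ∀ q : (Bool × Bool) × (C → Bool),
      (∏ i, wB p (toS q i)) = wB p q.1.1 * wB p q.1.2 * ∏ c, wB p (q.2 c) := by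
    rintro ⟨⟨a, b⟩, z⟩
    rw [prod_split s1 s2 hne (fun s => wB p (toS ((a, b), z) s))]
    show wB p (recomb s1 s2 a b z s1) * wB p (recomb s1 s2 a b z s2) * _ = _
    rw [recomb_s1, recomb_s2 hne]
    congr 1
    exact Finset.prod_congr rfl fun c _ => congrArg (wB p) (recomb_mem a b z c)
  -- the composed configuration
  have hθ : ∀ q : (Bool × Bool) × (C → Bool),
      (fun s => toS q (if s = s2 then s1 else s)) = recomb s1 s2 q.1.1 q.1.1 q.2 := by
    rintro ⟨⟨a, b⟩, z⟩
    funext s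
    by_cases h2 : s = s2
    · rw [if_pos h2, h2]
      show recomb s1 s2 a b z s1 = recomb s1 s2 a a z s2
      rw [recomb_s1, recomb_s2 hne]
    · rw [if_neg h2]
      by_cases h1 : s = s1
      · rw [h1]
        show recomb s1 s2 a b z s1 = recomb s1 s2 a a z s1
        rw [recomb_s1, recomb_s1]
      · show recomb s1 s2 a b z ((⟨s, h1, h2⟩ : C) : S) = recomb s1 s2 a a z ((⟨s, h1, h2⟩ : C) : S)
        rw [recomb_mem, recomb_mem]
  have eR : ∑ x : S → Bool, (∏ i, wB p (x i)) * biR (L x)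
      = ∑ q : (Bool × Bool) × (C → Bool),
          (wB p q.1.1 * wB p q.1.2 * ∏ c, wB p (q.2 c)) * biR (L (recomb s1 s2 q.1.1 q.1.2 q.2)) := by
    rw [← Fintype.sum_bijective toS hbij _ (fun x => (∏ i, wB p (x i)) * biR (L x)) (fun q => rfl)]
    refine Finset.sum_congr rfl fun q _ => ?_
    show (∏ i, wB p (toS q i)) * biR (L (recomb s1 s2 q.1.1 q.1.2 q.2)) = _
    rw [key q]
  have eL : ∑ x : S → Bool, (∏ i, wB p (x i)) * biR (L (fun s => x (if s = s2 then s1 else s)))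
      = ∑ q : (Bool × Bool) × (C → Bool),
          (wB p q.1.1 * wB p q.1.2 * ∏ c, wB p (q.2 c)) * biR (L (recomb s1 s2 q.1.1 q.1.1 q.2)) := by
    rw [← Fintype.sum_bijective toS hbij _
      (fun x => (∏ i, wB p (x i)) * biR (L (fun s => x (if s = s2 then s1 else s)))) (fun q => rfl)]
    refine Finset.sum_congr rfl fun q _ => ?_
    show (∏ i, wB p (toS q i)) * biR (L (fun s => toS q (if s = s2 then s1 else s))) = _
    rw [key q, hθ q]
  have hq : ∀ (fn : (Bool × Bool) × (C → Bool) → ℝ),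
      ∑ q : (Bool × Bool) × (C → Bool), fn q = ∑ z : C → Bool, ∑ ab : Bool × Bool, fn (ab, z) := by
    intro fn
    rw [Fintype.sum_prod_type]
    exact Finset.sum_comm
  rw [eR, eL, ge_iff_le, hq, hq]
  refine Finset.sum_le_sum fun z _ => ?_
  -- per fixed z
  have hWz : (0:ℝ) ≤ ∏ c, wB p (z c) :=
    Finset.prod_nonneg fun c _ => wB_nonneg hp0 hp1 _
  -- the exclusion
  have hbad : L (recomb s1 s2 true false z) = true → L (recomb s1 s2 false true z) = true →
      L (recomb s1 s2 false false z) = true := by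
    intro hB hC'
    by_contra hD
    replace hD : L (recomb s1 s2 false false z) = false := by
      cases hD' : L (recomb s1 s2 false false z)
      · rfl
      · exact absurd hD' hD
    obtain ⟨W, hWzero, hWind, hWmin⟩ := exists_min_zero L (recomb s1 s2 false false z) hD
    have hmemW : ∀ a b : Bool, ∀ hs1 : s1 ∉ W ∨ a = false, ∀ hs2 : s2 ∉ W ∨ b = false,
        recomb s1 s2 a b z ≤ indZ W := by
      intro a b ha hb s
      by_cases hsW : s ∈ W
      · have hiW : indZ W s = false := by simp [indZ, hsW]
        rw [hiW]
        by_cases h1 : s = s1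
        · rcases ha with h | h
          · exact absurd (h1 ▸ hsW) h
          · subst h1; rw [recomb_s1, (by assumption : a = false)]
        · by_cases h2 : s = s2
          · rcases hb with h | h
            · exact absurd (h2 ▸ hsW) h
            · subst h2; rw [recomb_s2 hne, (by assumption : b = false)]
          · have : recomb s1 s2 a b z s = z ⟨s, h1, h2⟩ := recomb_mem a b z ⟨s, h1, h2⟩
            rw [this]
            have := hWzero s hsW
            have h00 : recomb s1 s2 false false z s = z ⟨s, h1, h2⟩ := recomb_mem false false z ⟨s, h1, h2⟩
            rw [h00] at this
            rw [this]
      · have : indZ W s = true := by simp [indZ, hsW]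
        rw [this]
        exact Bool.le_true _
    have hs1W : s1 ∈ W := by
      by_contra hs1
      have hle := hmemW true false (Or.inl hs1) (Or.inr rfl)
      have := bool_le_trans hL hle hB
      rw [hWind] at this
      exact Bool.false_ne_true this
    have hs2W : s2 ∈ W := by
      by_contra hs2
      have hle := hmemW false true (Or.inr rfl) (Or.inl hs2)
      have := bool_le_trans hL hle hC'
      rw [hWind] at this
      exact Bool.false_ne_true this
    exact hno W hWind hWmin ⟨hs1W, hs2W⟩
  -- monotonicity facts
  have hmono : ∀ a b a' b' : Bool, a ≤ a' → b ≤ b' →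
      L (recomb s1 s2 a b z) = true → L (recomb s1 s2 a' b' z) = true := by
    intro a b a' b' haa hbb
    refine bool_le_trans hL (fun s => ?_)
    by_cases h1 : s = s1
    · subst h1; rw [recomb_s1, recomb_s1]; exact haa
    · by_cases h2 : s = s2
      · subst h2; rw [recomb_s2 hne, recomb_s2 hne]; exact hbb
      · rw [recomb_mem a b z ⟨s, h1, h2⟩, recomb_mem a' b' z ⟨s, h1, h2⟩]
  have hBA := hmono true false true true (le_refl _) (Bool.false_le _)
  have hCA := hmono false true true true (Bool.false_le _) (le_refl _)
  -- key scalar inequality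
  have hkey : biR (L (recomb s1 s2 true false z)) + biR (L (recomb s1 s2 false true z))
      ≤ biR (L (recomb s1 s2 true true z)) + biR (L (recomb s1 s2 false false z)) := by
    cases hA : L (recomb s1 s2 true true z) <;>
      cases hB : L (recomb s1 s2 true false z) <;>
        cases hC' : L (recomb s1 s2 false true z) <;>
          cases hD : L (recomb s1 s2 false false z) <;>
            simp_all [biR]
  clear hq eR eL key hθ hbij hbad hmono hBA hCA hno hL
  -- expand over the four (a,b) pairs
  simp only [Fintype.sum_prod_type, Fintype.sum_bool]
  have hp1' : (0:ℝ) ≤ 1 - p := by linarith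
  have hdiff : (0:ℝ) ≤ biR (L (recomb s1 s2 true true z)) + biR (L (recomb s1 s2 false false z))
      - biR (L (recomb s1 s2 true false z)) - biR (L (recomb s1 s2 false true z)) := by
    linarith
  have hpq : (0:ℝ) ≤ p * (1 - p) * ∏ c, wB p (z c) := mul_nonneg (mul_nonneg hp0 hp1') hWz
  simp only [wB_true, wB_false]
  nlinarith [mul_nonneg hpq hdiff]

end MergeStep

section Retract
set_option linter.unusedSectionVars false
set_option maxHeartbeats 1600000
variable {S : Type*} [Fintype S] [DecidableEq S]

lemma retract_step (p : ℝ) (hp0 : 0 ≤ p) (hp1 : p ≤ 1) (n : ℕ) :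
    ∀ L : (S → Bool) → Bool, Monotone L → ∀ π : S → S, (∀ s, π (π s) = π s) →
    (∀ Z : Finset S, L (indZ Z) = false → (∀ Y ⊂ Z, L (indZ Y) ≠ false) →
      (Z.image π).card = Z.card) →
    (Finset.univ.filter (fun s => π s ≠ s)).card ≤ n →
    ∑ x : S → Bool, (∏ i, wB p (x i)) * biR (L (fun s => x (π s)))
      ≥ ∑ x : S → Bool, (∏ i, wB p (x i)) * biR (L x) := by
  induction n with
  | zero =>
    intro L hL π hidem hinj hcard
    have hid : ∀ s, π s = s := by
      intro s
      by_contra h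
      have hmem : s ∈ Finset.univ.filter (fun s => π s ≠ s) := by
        simp only [Finset.mem_filter, Finset.mem_univ, true_and]; exact h
      have := Finset.card_pos.mpr ⟨s, hmem⟩
      omega
    refine le_of_eq (Finset.sum_congr rfl fun x _ => ?_)
    have : (fun s => x (π s)) = x := funext fun s => congrArg x (hid s)
    rw [this]
  | succ n IH =>
    intro L hL π hidem hinj hcard
    by_cases hid : ∀ s, π s = s
    · refine le_of_eq (Finset.sum_congr rfl fun x _ => ?_)
      have : (fun s => x (π s)) = x := funext fun s => congrArg x (hid s)
      rw [this]
    · push_neg at hid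
      obtain ⟨s2, hs2⟩ := hid
      have hfix1 : π (π s2) = π s2 := hidem s2
      have hs1ne : π s2 ≠ s2 := hs2
      -- no min zero-set contains both π s2 and s2
      have hno : ∀ Z : Finset S, L (indZ Z) = false → (∀ Y ⊂ Z, L (indZ Y) ≠ false) →
          ¬(π s2 ∈ Z ∧ s2 ∈ Z) := by
        rintro Z h1 h2 ⟨m1, m2⟩
        have hinjOn := Finset.injOn_of_card_image_eq (hinj Z h1 h2)
        have : π s2 = s2 := hinjOn m1 m2 (by rw [hfix1])
        exact hs1ne this
      have step1 := merge_step p hp0 hp1 L hL (π s2) s2 hs1ne hno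
      -- L1 and π'
      have hL1 : Monotone (fun x : S → Bool => L (fun s => x (if s = s2 then π s2 else s))) :=
        fun x y hxy => hL (fun s => hxy (if s = s2 then π s2 else s))
      have hs2notrange : ∀ s, π s ≠ s2 := by
        intro s h
        have := hidem s
        rw [h] at this
        exact hs2 this
      have hidem' : ∀ s, (fun s => if s = s2 then s2 else π s)
          ((fun s => if s = s2 then s2 else π s) s) = (fun s => if s = s2 then s2 else π s) s := by
        intro s
        by_cases h : s = s2
        · simp [h]
        · simp only [if_neg h, if_neg (hs2notrange s)]
          exact hidem s
      have hcomp : ∀ s, (if (if s = s2 then π s2 else s) = s2 then s2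
          else π (if s = s2 then π s2 else s)) = π s := by
        intro s
        by_cases h : s = s2
        · rw [if_pos h, if_neg hs1ne, h, hfix1]
        · rw [if_neg h, if_neg h]
      have hπθ : ∀ s, π (if s = s2 then π s2 else s) = π s := by
        intro s
        by_cases h : s = s2
        · rw [if_pos h, hfix1, h]
        · rw [if_neg h]
      -- hinj for L1, π'
      have hinj' : ∀ Z : Finset S,
          (fun x : S → Bool => L (fun s => x (if s = s2 then π s2 else s))) (indZ Z) = false →
          (∀ Y ⊂ Z, (fun x : S → Bool => L (fun s => x (if s = s2 then π s2 else s))) (indZ Y) ≠ false) →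
          (Z.image (fun s => if s = s2 then s2 else π s)).card = Z.card := by
        intro Z hZ hZmin
        obtain ⟨W, hWzero, hWind, hWmin⟩ :=
          exists_min_zero L (fun s => indZ Z (if s = s2 then π s2 else s)) hZ
        have hθW : ∀ w ∈ W, (if w = s2 then π s2 else w) ∈ Z := by
          intro w hw
          have h := hWzero w hw
          by_contra hmem
          simp only [indZ, if_neg hmem] at h
          exact absurd h (by decide)
        have hsub : W.image (fun w => if w = s2 then π s2 else w) ⊆ Z := by
          intro t ht
          obtain ⟨w, hw, rfl⟩ := Finset.mem_image.mp ht
          exact hθW w hw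
        have hZWzero : L (fun s => indZ (W.image (fun w => if w = s2 then π s2 else w))
            (if s = s2 then π s2 else s)) = false := by
          have hle : (fun s => indZ (W.image (fun w => if w = s2 then π s2 else w))
              (if s = s2 then π s2 else s)) ≤ indZ W := by
            intro s
            by_cases hs : s ∈ W
            · have hmem : (if s = s2 then π s2 else s) ∈ W.image (fun w => if w = s2 then π s2 else w) :=
                Finset.mem_image_of_mem _ hs
              simp only [indZ, if_pos hmem]
              exact Bool.false_le _
            · simp only [indZ, if_neg hs]
              exact Bool.le_true _
          have h := hL hle
          rw [hWind] at h
          exact le_antisymm h (Bool.false_le _)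
        have hZWeq : W.image (fun w => if w = s2 then π s2 else w) = Z := by
          by_contra hneq
          exact hZmin _ (lt_of_le_of_ne hsub hneq) hZWzero
        have hWcard := hinj W hWind hWmin
        have himg : Z.image π = W.image π := by
          rw [← hZWeq, Finset.image_image]
          refine Finset.image_congr fun w _ => ?_
          exact hπθ w
        have hs2Z : s2 ∉ Z := by
          rw [← hZWeq]
          intro h
          obtain ⟨w, hw, hww⟩ := Finset.mem_image.mp h
          by_cases hws2 : w = s2
          · rw [if_pos hws2] at hww
            exact hs1ne hww
          · rw [if_neg hws2] at hww
            exact hws2 hww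
        have himg' : Z.image (fun s => if s = s2 then s2 else π s) = Z.image π := by
          refine Finset.image_congr fun s hs => ?_
          have : s ≠ s2 := fun h => hs2Z (h ▸ hs)
          rw [if_neg this]
        have hZleW : Z.card ≤ W.card := by
          rw [← hZWeq]
          exact Finset.card_image_le
        have h1 : (Z.image (fun s => if s = s2 then s2 else π s)).card = W.card := by
          rw [himg', himg, hWcard]
        have h2 : (Z.image (fun s => if s = s2 then s2 else π s)).card ≤ Z.card :=
          Finset.card_image_le
        omega
      have hcard' : (Finset.univ.filter (fun s => (fun s => if s = s2 then s2 else π s) s ≠ s)).card ≤ n := by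
        have hsub : Finset.univ.filter (fun s => (fun s => if s = s2 then s2 else π s) s ≠ s)
            ⊆ (Finset.univ.filter (fun s => π s ≠ s)).erase s2 := by
          intro s hs
          simp only [Finset.mem_filter, Finset.mem_univ, true_and] at hs
          rw [Finset.mem_erase]
          constructor
          · intro h
            subst h
            simp at hs
          · simp only [Finset.mem_filter, Finset.mem_univ, true_and]
            intro h
            apply hs
            by_cases h2 : s = s2
            · rw [if_pos h2, h2]
            · rw [if_neg h2, h]
        have hmem2 : s2 ∈ Finset.univ.filter (fun s => π s ≠ s) := by
          simp only [Finset.mem_filter, Finset.mem_univ, true_and]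
          exact hs2
        have := Finset.card_le_card hsub
        rw [Finset.card_erase_of_mem hmem2] at this
        omega
      have step2 := IH (fun x : S → Bool => L (fun s => x (if s = s2 then π s2 else s))) hL1
        (fun s => if s = s2 then s2 else π s) hidem' hinj' hcard'
      rw [ge_iff_le]
      calc ∑ x : S → Bool, (∏ i, wB p (x i)) * biR (L x)
          ≤ ∑ x : S → Bool, (∏ i, wB p (x i)) *
              biR (L (fun s => x (if s = s2 then π s2 else s))) := step1
        _ ≤ ∑ x : S → Bool, (∏ i, wB p (x i)) *
              biR (L (fun s' => x (if (if s' = s2 then π s2 else s') = s2 then s2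
                else π (if s' = s2 then π s2 else s')))) := step2
        _ = ∑ x : S → Bool, (∏ i, wB p (x i)) * biR (L (fun s => x (π s))) := by
            refine Finset.sum_congr rfl fun x _ => ?_
            rw [funext fun s => congrArg x (hcomp s)]

end Retract

section Final
set_option linter.unusedSectionVars false
set_option maxHeartbeats 1600000

theorem stmt_3' {S T : Type*} [Fintype S] [DecidableEq S] [Fintype T] [DecidableEq T]
    (L : (S → Bool) → Bool) (hL : Monotone L) (ψ : S → T)
    (hψ : ∀ Z : Finset S,
      L (fun i => if i ∈ Z then false else true) = false →
      (∀ Y : Finset S, Y ⊂ Z → L (fun i => if i ∈ Y then false else true) ≠ false) →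
      (Z.image ψ).card = Z.card)
    (p : ℝ) (hp0 : 0 ≤ p) (hp1 : p ≤ 1) :
    (∑ y : T → Bool, (∏ j, wB p (y j)) * biR (L (fun i => y (ψ i))))
      ≥ ∑ x : S → Bool, (∏ i, wB p (x i)) * biR (L x) := by
  classical
  by_cases hS : IsEmpty S
  · -- S empty : both sides are equal
    haveI := hS
    set x0 : S → Bool := fun i => (hS.false i).elim with hx0def
    have hx0 : ∀ x : S → Bool, x = x0 := fun x => funext fun i => (hS.false i).elim
    have hLHS : ∑ y : T → Bool, (∏ j, wB p (y j)) * biR (L (fun i => y (ψ i)))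
        = biR (L x0) := by
      have : ∀ y : T → Bool, (fun i => y (ψ i)) = x0 := fun y => hx0 _
      calc ∑ y : T → Bool, (∏ j, wB p (y j)) * biR (L (fun i => y (ψ i)))
          = ∑ y : T → Bool, (∏ j, wB p (y j)) * biR (L x0) :=
            Finset.sum_congr rfl fun y _ => by rw [this y]
        _ = (∑ y : T → Bool, ∏ j, wB p (y j)) * biR (L x0) := by rw [Finset.sum_mul]
        _ = biR (L x0) := by rw [sum_w_one T p, one_mul]
    have hRHS : ∑ x : S → Bool, (∏ i, wB p (x i)) * biR (L x) = biR (L x0) := by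
      calc ∑ x : S → Bool, (∏ i, wB p (x i)) * biR (L x)
          = ∑ _x : S → Bool, biR (L x0) := Finset.sum_congr rfl fun x _ => by
            rw [Finset.univ_eq_empty, Finset.prod_empty, one_mul, hx0 x]
        _ = Fintype.card (S → Bool) • biR (L x0) := by
            rw [Finset.sum_const, Finset.card_univ]
        _ = biR (L x0) := by
            haveI : Unique (S → Bool) := ⟨⟨x0⟩, fun x => hx0 x⟩
            rw [Fintype.card_unique, one_smul]
    rw [hLHS, hRHS]
  · haveI : Nonempty S := not_isEmpty_iff.mp hS
    set ρ : T → S := Function.invFun ψ with hρdef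
    set π : S → S := fun s => ρ (ψ s) with hπdef
    have hsec : ∀ s, ψ (π s) = ψ s := fun s => Function.invFun_eq ⟨s, rfl⟩
    have hidem : ∀ s, π (π s) = π s := fun s => congrArg ρ (hsec s)
    have hinjπ : ∀ Z : Finset S, L (indZ Z) = false → (∀ Y ⊂ Z, L (indZ Y) ≠ false) →
        (Z.image π).card = Z.card := by
      intro Z h1 h2
      have hψZ := hψ Z h1 h2
      have hinjOn := Finset.injOn_of_card_image_eq hψZ
      have hπinj : Set.InjOn π ↑Z := fun a ha b hb h =>
        hinjOn ha hb (by rw [← hsec a, ← hsec b]; exact congrArg ψ h)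
      exact Finset.card_image_of_injOn hπinj
    have stepA := retract_step p hp0 hp1 (Fintype.card S) L hL π hidem hinjπ
      (le_trans (Finset.card_filter_le _ _) (le_of_eq Finset.card_univ))
    -- bridge: reindex the T-sum to the S-sum через the retraction π
    have hBridge : ∑ y : T → Bool, (∏ j, wB p (y j)) * biR (L (fun i => y (ψ i)))
        = ∑ x : S → Bool, (∏ i, wB p (x i)) * biR (L (fun s => x (π s))) := by
      have hB1 := sum_reindex_inj p (Subtype.val : {t : T // ∃ s, ψ s = t} → T)
        Subtype.val_injective
        (fun u : {t : T // ∃ s, ψ s = t} → Bool => biR (L (fun s => u ⟨ψ s, s, rfl⟩)))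
      have hB2 := sum_reindex_inj p (Subtype.val : {u : S // ∃ s, π s = u} → S)
        Subtype.val_injective
        (fun v : {u : S // ∃ s, π s = u} → Bool => biR (L (fun s => v ⟨π s, s, rfl⟩)))
      set e : {u : S // ∃ s, π s = u} ≃ {t : T // ∃ s, ψ s = t} :=
        { toFun := fun u => ⟨ψ u.1, u.1, rfl⟩
          invFun := fun t => ⟨ρ t.1, t.2.choose, congrArg ρ t.2.choose_spec⟩
          left_inv := by
            rintro ⟨u, hu⟩
            obtain ⟨s, rfl⟩ := hu
            refine Subtype.ext ?_
            show ρ (ψ (π s)) = π s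
            rw [hsec s]
          right_inv := by
            rintro ⟨t, ht⟩
            exact Subtype.ext (Function.invFun_eq ht) } with hedef
      have hB3 := sum_reindex_equiv p e
        (fun u : {t : T // ∃ s, ψ s = t} → Bool => biR (L (fun s => u ⟨ψ s, s, rfl⟩)))
      have hcompat : ∀ (v : {u : S // ∃ s, π s = u} → Bool) (s : S),
          v (e.symm ⟨ψ s, s, rfl⟩) = v ⟨π s, s, rfl⟩ := by
        intro v s
        refine congrArg v ?_
        have : e ⟨π s, s, rfl⟩ = ⟨ψ s, s, rfl⟩ := Subtype.ext (hsec s)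
        rw [← this, Equiv.symm_apply_apply]
      calc ∑ y : T → Bool, (∏ j, wB p (y j)) * biR (L (fun i => y (ψ i)))
          = ∑ u : {t : T // ∃ s, ψ s = t} → Bool, (∏ r, wB p (u r)) *
              biR (L (fun s => u ⟨ψ s, s, rfl⟩)) := hB1
        _ = ∑ v : {u : S // ∃ s, π s = u} → Bool, (∏ r, wB p (v r)) *
              biR (L (fun s => v (e.symm ⟨ψ s, s, rfl⟩))) := hB3
        _ = ∑ v : {u : S // ∃ s, π s = u} → Bool, (∏ r, wB p (v r)) *
              biR (L (fun s => v ⟨π s, s, rfl⟩)) := by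
            refine Finset.sum_congr rfl fun v _ => ?_
            rw [funext fun s => hcompat v s]
        _ = ∑ x : S → Bool, (∏ i, wB p (x i)) * biR (L (fun s => x (π s))) := hB2.symm
    rw [hBridge]
    exact stepA

end Final

end StmtAux


/-- if ψ is injective on every minimal zero-set of the monotone Boolean
function L, then P[L(Y∘ψ)=1] ≥ P[L(X)=1] for i.i.d. Bernoulli(p) collections X, Y. -/
theorem stmt_3 {S T : Type*} [Fintype S] [DecidableEq S] [Fintype T] [DecidableEq T]
    (L : (S → Bool) → Bool) (hL : Monotone L) (ψ : S → T)
    (hψ : ∀ Z : Finset S,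
      L (fun i => if i ∈ Z then false else true) = false →
      (∀ Y : Finset S, Y ⊂ Z → L (fun i => if i ∈ Y then false else true) ≠ false) →
      (Z.image ψ).card = Z.card)
    (p : ℝ) (hp0 : 0 ≤ p) (hp1 : p ≤ 1) :
    (∑ y : T → Bool, (∏ j, if y j then p else 1 - p) *
        (if L (fun i => y (ψ i)) then 1 else 0))
      ≥ ∑ x : S → Bool, (∏ i, if x i then p else 1 - p) * (if L x then 1 else 0) :=
  stmt_3' L hL ψ hψ p hp0 hp1
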